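/- Let g ∈ Mon(X). For all x ≤ y in Fact(G,g,I), the interval [x,y] = {z ∈ Fact(G,g,I) : x ≤ z ≤ y} is order-isomorphic to the poset of all subsets of some finite set, ordered by inclusion; that is, every interval of Fact(G,g,I) is isomorphic to a Boolean lattice. -/

import Mathlib

noncomputable def wlen {G : Type*} [Group G] (X : Set G) (g : G) : ℕ :=
  sInf {n | ∃ l : List G, l.length = n ∧ (∀ x ∈ l, x ∈ X) ∧ l.prod = g}

def IsLinFact {G : Type*} [Group G] (X : Set G) (g : G) (p : G × List G × G) : Prop :=
  p.1 ∈ Submonoid.closure X ∧ p.2.2 ∈ Submonoid.closure X ∧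
    (∀ a ∈ p.2.1, a ∈ Submonoid.closure X ∧ a ≠ 1) ∧
    p.1 * p.2.1.prod * p.2.2 = g ∧
    wlen X p.1 + (p.2.1.map (wlen X)).sum + wlen X p.2.2 = wlen X g

inductive MergeStep {G : Type*} [Group G] : G × List G × G → G × List G × G → Prop
  | left (xL a : G) (l : List G) (xR : G) :
      MergeStep (xL * a, l, xR) (xL, a :: l, xR)
  | mid (xL : G) (l₁ : List G) (a b : G) (l₂ : List G) (xR : G) :
      MergeStep (xL, l₁ ++ (a * b) :: l₂, xR) (xL, l₁ ++ a :: b :: l₂, xR)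
  | right (xL : G) (l : List G) (a xR : G) :
      MergeStep (xL, l, a * xR) (xL, l ++ [a], xR)

/-- The poset `Fact(G,g,I)` of linear factorizations of `g`, ordered by merges. -/
abbrev FactI {G : Type*} [Group G] (X : Set G) (g : G) := {p : G × List G × G // IsLinFact X g p}

instance {G : Type*} [Group G] (X : Set G) (g : G) : LE (FactI X g) :=
  ⟨fun a b => Relation.ReflTransGen MergeStep a.val b.val⟩


namespace Aux

variable {G : Type*} [Group G] {X : Set G}

theorem wlen_le {g : G} (l : List G) (h : ∀ x ∈ l, x ∈ X) (hp : l.prod = g) :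
    wlen X g ≤ l.length :=
  Nat.sInf_le ⟨l, rfl, h, hp⟩

theorem wlen_exists {g : G} (hg : g ∈ Submonoid.closure X) :
    ∃ l : List G, (∀ x ∈ l, x ∈ X) ∧ l.prod = g ∧ l.length = wlen X g := by
  obtain ⟨l, hl, hp⟩ := Submonoid.exists_list_of_mem_closure hg
  have hne : {n | ∃ l : List G, l.length = n ∧ (∀ x ∈ l, x ∈ X) ∧ l.prod = g}.Nonempty :=
    ⟨l.length, l, rfl, hl, hp⟩
  obtain ⟨l', hlen, hl', hp'⟩ := Nat.sInf_mem hne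
  exact ⟨l', hl', hp', hlen⟩

theorem wlen_one : wlen X (1 : G) = 0 :=
  Nat.le_zero.1 (by simpa using wlen_le (X := X) ([] : List G) (by simp) (by simp))

theorem one_le_wlen {g : G} (hg : g ∈ Submonoid.closure X) (h : g ≠ 1) :
    1 ≤ wlen X g := by
  by_contra hlt
  obtain ⟨l, hl, hp, hlen⟩ := wlen_exists hg
  have : l.length = 0 := by omega
  rw [List.length_eq_zero_iff] at this
  subst this
  simp at hp
  exact h hp.symm

theorem wlen_mul_le {a b : G} (ha : a ∈ Submonoid.closure X) (hb : b ∈ Submonoid.closure X) :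
    wlen X (a * b) ≤ wlen X a + wlen X b := by
  obtain ⟨l₁, h₁, hp₁, hlen₁⟩ := wlen_exists ha
  obtain ⟨l₂, h₂, hp₂, hlen₂⟩ := wlen_exists hb
  calc wlen X (a * b) ≤ (l₁ ++ l₂).length := by
        refine wlen_le _ ?_ (by simp [hp₁, hp₂])
        intro x hx; rcases List.mem_append.1 hx with h | h
        · exact h₁ x h
        · exact h₂ x h
    _ = wlen X a + wlen X b := by simp [hlen₁, hlen₂]

theorem wlen_prod_le (l : List G) (h : ∀ a ∈ l, a ∈ Submonoid.closure X) :
    wlen X l.prod ≤ (l.map (wlen X)).sum := by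
  induction l with
  | nil => simp [wlen_one]
  | cons a t ih =>
    simp only [List.prod_cons, List.map_cons, List.sum_cons]
    calc wlen X (a * t.prod) ≤ wlen X a + wlen X t.prod :=
          wlen_mul_le (h a (by simp)) (list_prod_mem (fun x hx => h x (by simp [hx])))
      _ ≤ wlen X a + (t.map (wlen X)).sum := by
          have := ih (fun x hx => h x (by simp [hx])); omega

/-- Lemma A: additivity of wlen on consecutive subproducts of a geodesic factorization. -/
theorem wlen_additive {F u v w : List G} (hF : ∀ a ∈ F, a ∈ Submonoid.closure X)
    (hsum : (F.map (wlen X)).sum = wlen X F.prod) (hsplit : F = u ++ v ++ w) :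
    wlen X v.prod = (v.map (wlen X)).sum := by
  subst hsplit
  have hu : ∀ a ∈ u, a ∈ Submonoid.closure X := fun a ha => hF a (by simp [ha])
  have hv : ∀ a ∈ v, a ∈ Submonoid.closure X := fun a ha => hF a (by simp [ha])
  have hw : ∀ a ∈ w, a ∈ Submonoid.closure X := fun a ha => hF a (by simp [ha])
  have h1 : wlen X (u ++ v ++ w).prod ≤ wlen X u.prod + wlen X v.prod + wlen X w.prod := by
    have hup : u.prod ∈ Submonoid.closure X := list_prod_mem hu
    have hvp : v.prod ∈ Submonoid.closure X := list_prod_mem hv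
    have hwp : w.prod ∈ Submonoid.closure X := list_prod_mem hw
    calc wlen X (u ++ v ++ w).prod = wlen X (u.prod * v.prod * w.prod) := by simp [mul_assoc]
      _ ≤ wlen X (u.prod * v.prod) + wlen X w.prod := wlen_mul_le (mul_mem hup hvp) hwp
      _ ≤ wlen X u.prod + wlen X v.prod + wlen X w.prod := by
          have := wlen_mul_le hup hvp; omega
  have h2 : wlen X u.prod ≤ (u.map (wlen X)).sum := wlen_prod_le u hu
  have h3 : wlen X v.prod ≤ (v.map (wlen X)).sum := wlen_prod_le v hv
  have h4 : wlen X w.prod ≤ (w.map (wlen X)).sum := wlen_prod_le w hw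
  have h5 : ((u ++ v ++ w).map (wlen X)).sum
      = (u.map (wlen X)).sum + (v.map (wlen X)).sum + (w.map (wlen X)).sum := by simp [add_assoc]
  omega



/-- Merge a list of group elements according to gap bits: each pair `(b, x)`,
`b = true` means the gap before `x` is closed (merge `x` into current block). -/
def blocks : G → List (Bool × G) → List G
  | a, [] => [a]
  | a, (true, x) :: t => blocks (a * x) t
  | a, (false, x) :: t => a :: blocks x t

/-- One merge of adjacent entries, at the level of flattened lists. -/
def Step (v w : List G) : Prop := ∃ u a b t, w = u ++ a :: b :: t ∧ v = u ++ (a * b) :: t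

theorem Step.cons {v w : List G} (c : G) (h : Step v w) : Step (c :: v) (c :: w) := by
  obtain ⟨u, a, b, t, hw, hv⟩ := h
  exact ⟨c :: u, a, b, t, by simp [hw], by simp [hv]⟩

theorem Step.length {v w : List G} (h : Step v w) : w.length = v.length + 1 := by
  obtain ⟨u, a, b, t, hw, hv⟩ := h; subst hw; subst hv; simp; omega

theorem blocks_ne_nil (a : G) (p : List (Bool × G)) : blocks a p ≠ [] := by
  induction p generalizing a with
  | nil => simp [blocks]
  | cons q t ih =>
    obtain ⟨b, x⟩ := q
    cases b <;> simp [blocks, ih]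

theorem blocks_length (a : G) (p : List (Bool × G)) :
    (blocks a p).length = 1 + p.countP (fun q => !q.1) := by
  induction p generalizing a with
  | nil => simp [blocks]
  | cons q t ih =>
    obtain ⟨b, x⟩ := q
    cases b <;> simp [blocks, ih, List.countP_cons] <;> omega

theorem blocks_head (a : G) (p : List (Bool × G)) :
    (blocks a p).head? = some (a * ((p.takeWhile (·.1)).map Prod.snd).prod) := by
  induction p generalizing a with
  | nil => simp [blocks]
  | cons q t ih =>
    obtain ⟨b, x⟩ := q
    cases b
    · simp [blocks, List.takeWhile_cons]
    · simp [blocks, ih, List.takeWhile_cons, mul_assoc]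

/-- Merging the very first gap is a single Step. -/
theorem step_blocks (a b : G) (t : List (Bool × G)) :
    Step (blocks (a * b) t) (a :: blocks b t) := by
  induction t generalizing a b with
  | nil => exact ⟨[], a, b, [], by simp [blocks], by simp [blocks]⟩
  | cons q t ih =>
    obtain ⟨c, x⟩ := q
    cases c
    · exact ⟨[], a, b, blocks x t, by simp [blocks], by simp [blocks]⟩
    · have := ih a (b * x)
      simpa [blocks, mul_assoc] using this

theorem blocks_cons_mul {x b : G} {p : List (Bool × G)} {t : List G} (c : G)
    (h : blocks x p = b :: t) : blocks (c * x) p = (c * b) :: t := by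
  induction p generalizing x c with
  | nil =>
    simp only [blocks] at h
    injection h with h1 h2
    simp [blocks, ← h1, ← h2]
  | cons q r ih =>
    obtain ⟨bb, z⟩ := q
    cases bb
    · simp only [blocks] at h ⊢
      injection h with h1 h2
      simp [← h1, ← h2]
    · simp only [blocks] at h ⊢
      rw [mul_assoc]
      exact ih c h

/-- Pointwise order on gap-bit lists: same elements, fewer-or-equal closed gaps. -/
def POrd : List (Bool × G) → List (Bool × G) → Prop :=
  List.Forall₂ (fun a b => a.2 = b.2 ∧ (a.1 = true → b.1 = true))

theorem POrd.refl (p : List (Bool × G)) : POrd p p :=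
  List.forall₂_same.2 (fun _ _ => ⟨rfl, id⟩)

theorem POrd.trans {p q r : List (Bool × G)} (h₁ : POrd p q) (h₂ : POrd q r) : POrd p r := by
  induction h₁ generalizing r with
  | nil => cases h₂; exact List.Forall₂.nil
  | cons h t ih =>
    cases h₂ with
    | cons h' t' => exact List.Forall₂.cons ⟨h.1.trans h'.1, fun hh => h'.2 (h.2 hh)⟩ (ih t')

theorem POrd.map_snd {p q : List (Bool × G)} (h : POrd p q) :
    p.map Prod.snd = q.map Prod.snd := by
  induction h with
  | nil => rfl
  | cons h t ih => simp [h.1, ih]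

theorem POrd.count {p q : List (Bool × G)} (h : POrd p q) :
    q.countP (fun a => !a.1) ≤ p.countP (fun a => !a.1) := by
  induction h with
  | nil => simp
  | @cons a b l₁ l₂ h t ih =>
    simp only [List.countP_cons]
    rcases hb : b.1 with _ | _
    · rcases ha : a.1 with _ | _
      · simp; omega
      · exact absurd (h.2 ha) (by simp [hb])
    · simp; omega

/-- Monotonicity: coarser bit lists are reachable by merges from finer ones. -/
theorem blocks_mono {p q : List (Bool × G)} (h : POrd p q) (L : G) :
    Relation.ReflTransGen Step (blocks L q) (blocks L p) := by
  induction h generalizing L with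
  | nil => exact Relation.ReflTransGen.refl
  | @cons a b p' q' hpq t ih =>
    obtain ⟨b₁, x⟩ := a
    obtain ⟨b₂, x'⟩ := b
    obtain rfl : x = x' := hpq.1
    cases b₁
    · cases b₂
      · -- false false
        simp only [blocks]
        exact Relation.ReflTransGen.lift (fun l => L :: l) (fun _ _ (h : Step _ _) => h.cons L) _ _ (ih x)
      · -- false → true : q coarser at this gap
        simp only [blocks]
        exact (ih (L * x)).tail (step_blocks L x p')
    · have hb₂ : b₂ = true := hpq.2 rfl
      subst hb₂
      simp only [blocks]
      exact ih (L * x)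

/-- Downward closure: a Step from a blocks-presentation is again a blocks-presentation. -/
theorem blocks_split {p : List (Bool × G)} {L : G} {u t : List G} {a b : G}
    (h : blocks L p = u ++ a :: b :: t) :
    ∃ p', POrd p p' ∧ blocks L p' = u ++ (a * b) :: t := by
  induction p generalizing L u with
  | nil =>
    exfalso
    have := congrArg List.length h
    simp [blocks] at this
    omega
  | cons q r ih =>
    obtain ⟨bb, x⟩ := q
    cases bb
    · simp only [blocks] at h
      cases u with
      | nil =>
        simp only [List.nil_append] at h ⊢
        injection h with h1 h2
        subst h1
        refine ⟨(true, x) :: r, ?_, ?_⟩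
        · exact List.Forall₂.cons ⟨rfl, by simp⟩ (POrd.refl r)
        · simp only [blocks]
          exact blocks_cons_mul L h2
      | cons c u' =>
        simp only [List.cons_append] at h
        injection h with h1 h2
        subst h1
        obtain ⟨p', hp', hb'⟩ := ih h2
        exact ⟨(false, x) :: p', List.Forall₂.cons ⟨rfl, by simp⟩ hp', by simp [blocks, hb']⟩
    · simp only [blocks] at h
      obtain ⟨p', hp', hb'⟩ := ih h
      exact ⟨(true, x) :: p', List.Forall₂.cons ⟨rfl, by simp⟩ hp', by simp [blocks, hb']⟩

theorem blocks_allFalse (L : G) (xs : List G) :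
    blocks L (xs.map (fun x => (false, x))) = L :: xs := by
  induction xs generalizing L with
  | nil => simp [blocks]
  | cons x t ih => simp [blocks, ih]


end Aux

namespace Aux
variable {G : Type*} [Group G]

def flat (p : G × List G × G) : List G := p.1 :: (p.2.1 ++ [p.2.2])

def unflat (l : List G) : G × List G × G := (l.headD 1, l.tail.dropLast, l.getLastD 1)

theorem flat_length (p : G × List G × G) : (flat p).length = p.2.1.length + 2 := by
  simp [flat]

theorem unflat_concat (c : G) (l : List G) (r : G) : unflat (c :: (l ++ [r])) = (c, l, r) := by
  simp only [unflat, List.headD_cons, List.tail_cons, List.dropLast_concat]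
  rw [show c :: (l ++ [r]) = (c :: l) ++ [r] from rfl, List.getLastD_eq_getLast?,
    List.getLast?_concat]
  rfl

theorem unflat_flat (p : G × List G × G) : unflat (flat p) = p := by
  obtain ⟨L, m, R⟩ := p
  exact unflat_concat L m R

theorem flat_unflat {l : List G} (h : 2 ≤ l.length) : flat (unflat l) = l := by
  match l, h with
  | a :: b :: t, _ =>
    obtain ⟨t', r, ht⟩ := (b :: t).eq_nil_or_concat.resolve_left (by simp)
    rw [List.concat_eq_append] at ht
    rw [ht, unflat_concat]
    rfl

theorem mergeStep_flat {p q : G × List G × G} (h : MergeStep p q) :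
    Step (flat p) (flat q) := by
  cases h with
  | left xL a l xR => exact ⟨[], xL, a, l ++ [xR], by simp [flat], by simp [flat]⟩
  | mid xL l₁ a b l₂ xR =>
    exact ⟨xL :: l₁, a, b, l₂ ++ [xR], by simp [flat], by simp [flat]⟩
  | right xL l a xR => exact ⟨xL :: l, a, xR, [], by simp [flat], by simp [flat]⟩

theorem step_unflat {v w : List G} (h : Step v w) (hv : 2 ≤ v.length) :
    MergeStep (unflat v) (unflat w) := by
  obtain ⟨u, a, b, t, rfl, rfl⟩ := h
  cases u with
  | nil =>
    have ht : t ≠ [] := by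
      intro h; subst h; simp at hv
    obtain ⟨t', r, ht2⟩ := t.eq_nil_or_concat.resolve_left ht
    rw [List.concat_eq_append] at ht2
    subst ht2
    have h1 : unflat ([] ++ (a * b) :: (t' ++ [r])) = (a * b, t', r) := unflat_concat _ _ _
    have h2 : unflat ([] ++ a :: b :: (t' ++ [r])) = (a, b :: t', r) := by
      rw [show [] ++ a :: b :: (t' ++ [r]) = a :: ((b :: t') ++ [r]) by simp]
      exact unflat_concat _ _ _
    rw [h1, h2]
    exact MergeStep.left a b t' r
  | cons c u' =>
    rcases t.eq_nil_or_concat with rfl | ⟨t', r, ht2⟩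
    · have h1 : unflat ((c :: u') ++ [a * b]) = (c, u', a * b) := by
        rw [show (c :: u') ++ [a * b] = c :: (u' ++ [a * b]) by simp]
        exact unflat_concat _ _ _
      have h2 : unflat ((c :: u') ++ [a, b]) = (c, u' ++ [a], b) := by
        rw [show (c :: u') ++ [a, b] = c :: ((u' ++ [a]) ++ [b]) by simp]
        exact unflat_concat _ _ _
      rw [show ((a*b) :: ([] : List G)) = [a * b] from rfl] at *
      rw [h1, h2]
      exact MergeStep.right c u' a b
    · rw [List.concat_eq_append] at ht2
      subst ht2
      have h1 : unflat ((c :: u') ++ (a * b) :: (t' ++ [r])) = (c, u' ++ (a * b) :: t', r) := by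
        rw [show (c :: u') ++ (a * b) :: (t' ++ [r]) = c :: ((u' ++ (a * b) :: t') ++ [r]) by simp]
        exact unflat_concat _ _ _
      have h2 : unflat ((c :: u') ++ a :: b :: (t' ++ [r])) = (c, u' ++ a :: b :: t', r) := by
        rw [show (c :: u') ++ a :: b :: (t' ++ [r]) = c :: ((u' ++ a :: b :: t') ++ [r]) by simp]
        exact unflat_concat _ _ _
      rw [h1, h2]
      exact MergeStep.mid c u' a b t' r

theorem step_chain {v w : List G} (h : Relation.ReflTransGen Step v w) (hv : 2 ≤ v.length) :
    Relation.ReflTransGen MergeStep (unflat v) (unflat w) := by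
  induction h using Relation.ReflTransGen.head_induction_on with
  | refl => exact Relation.ReflTransGen.refl
  | head h' hc ih =>
    rename_i a c
    have hc2 : 2 ≤ c.length := by
      have := h'.length; omega
    exact Relation.ReflTransGen.head (step_unflat h' hv) (ih hc2)

theorem mergeStep_chain_flat {p q : G × List G × G}
    (h : Relation.ReflTransGen MergeStep p q) :
    Relation.ReflTransGen Step (flat p) (flat q) :=
  Relation.ReflTransGen.lift flat (fun _ _ => mergeStep_flat) _ _ h

end Aux

namespace Aux
variable {G : Type*} [Group G] {X : Set G}

theorem wlen_triple_le {A C : G} (B : List G) (hA : A ∈ Submonoid.closure X)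
    (hB : ∀ z ∈ B, z ∈ Submonoid.closure X) (hC : C ∈ Submonoid.closure X) :
    wlen X (A * B.prod * C) ≤ wlen X A + (B.map (wlen X)).sum + wlen X C := by
  have hBp : B.prod ∈ Submonoid.closure X := list_prod_mem hB
  calc wlen X (A * B.prod * C) ≤ wlen X (A * B.prod) + wlen X C :=
        wlen_mul_le (mul_mem hA hBp) hC
    _ ≤ wlen X A + wlen X B.prod + wlen X C := by have := wlen_mul_le hA hBp; omega
    _ ≤ wlen X A + (B.map (wlen X)).sum + wlen X C := by have := wlen_prod_le B hB; omega

theorem isLinFact_of_mergeStep {g : G} {p q : G × List G × G}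
    (hq : IsLinFact X g q) (h : MergeStep p q) : IsLinFact X g p := by
  obtain ⟨hL, hR, hm, hprod, hsum⟩ := hq
  cases h with
  | left xL a l xR =>
    simp only at hL hR hm hprod hsum ⊢
    have ha := hm a (by simp)
    have hlm : ∀ z ∈ l, z ∈ Submonoid.closure X ∧ z ≠ 1 := fun z hz => hm z (by simp [hz])
    have hprod' : (xL * a) * l.prod * xR = g := by
      rw [← hprod]; simp [mul_assoc]
    have hge : wlen X g ≤ wlen X (xL * a) + (l.map (wlen X)).sum + wlen X xR := by
      rw [← hprod']
      exact wlen_triple_le l (mul_mem hL ha.1) (fun z hz => (hlm z hz).1) hR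
    have hle : wlen X (xL * a) ≤ wlen X xL + wlen X a := wlen_mul_le hL ha.1
    have hsum2 : wlen X xL + (wlen X a + (l.map (wlen X)).sum) + wlen X xR = wlen X g := by
      simpa using hsum
    exact ⟨mul_mem hL ha.1, hR, hlm, hprod', by
      show wlen X (xL * a) + (l.map (wlen X)).sum + wlen X xR = wlen X g
      omega⟩
  | mid xL l₁ a b l₂ xR =>
    simp only at hL hR hm hprod hsum ⊢
    have ha := hm a (by simp)
    have hb := hm b (by simp)
    have hlm : ∀ z ∈ l₁ ++ (a * b) :: l₂, z ∈ Submonoid.closure X := by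
      intro z hz
      rcases List.mem_append.1 hz with h | h
      · exact (hm z (by simp [h])).1
      · rcases List.mem_cons.1 h with rfl | h
        · exact mul_mem ha.1 hb.1
        · exact (hm z (by simp [h])).1
    have hprod' : xL * (l₁ ++ (a * b) :: l₂).prod * xR = g := by
      rw [← hprod]; simp [List.prod_append, List.prod_cons, mul_assoc]
    have hge : wlen X g ≤ wlen X xL + ((l₁ ++ (a * b) :: l₂).map (wlen X)).sum + wlen X xR := by
      rw [← hprod']
      exact wlen_triple_le _ hL hlm hR
    have hle : wlen X (a * b) ≤ wlen X a + wlen X b := wlen_mul_le ha.1 hb.1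
    have hsum2 : wlen X xL + ((l₁.map (wlen X)).sum + (wlen X a + (wlen X b
        + (l₂.map (wlen X)).sum))) + wlen X xR = wlen X g := by
      simpa using hsum
    have hnew : ((l₁ ++ (a * b) :: l₂).map (wlen X)).sum
        = (l₁.map (wlen X)).sum + (wlen X (a * b) + (l₂.map (wlen X)).sum) := by simp
    have heq : wlen X (a * b) = wlen X a + wlen X b := by omega
    have hab1 : a * b ≠ 1 := by
      intro h1
      have h0 : wlen X (a * b) = 0 := by rw [h1]; exact wlen_one
      have := one_le_wlen ha.1 ha.2
      omega
    refine ⟨hL, hR, ?_, hprod', by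
      show wlen X xL + ((l₁ ++ (a * b) :: l₂).map (wlen X)).sum + wlen X xR = wlen X g
      omega⟩
    intro z hz
    rcases List.mem_append.1 hz with h | h
    · exact hm z (by simp [h])
    · rcases List.mem_cons.1 h with rfl | h
      · exact ⟨mul_mem ha.1 hb.1, hab1⟩
      · exact hm z (by simp [h])
  | right xL l a xR =>
    simp only at hL hR hm hprod hsum ⊢
    have ha := hm a (by simp)
    have hlm : ∀ z ∈ l, z ∈ Submonoid.closure X ∧ z ≠ 1 := fun z hz => hm z (by simp [hz])
    have hprod' : xL * l.prod * (a * xR) = g := by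
      rw [← hprod]; simp [List.prod_append, mul_assoc]
    have hge : wlen X g ≤ wlen X xL + (l.map (wlen X)).sum + wlen X (a * xR) := by
      rw [← hprod']
      exact wlen_triple_le l hL (fun z hz => (hlm z hz).1) (mul_mem ha.1 hR)
    have hle : wlen X (a * xR) ≤ wlen X a + wlen X xR := wlen_mul_le ha.1 hR
    have hsum2 : wlen X xL + ((l.map (wlen X)).sum + wlen X a) + wlen X xR = wlen X g := by
      simpa using hsum
    exact ⟨hL, mul_mem ha.1 hR, hlm, hprod', by
      show wlen X xL + (l.map (wlen X)).sum + wlen X (a * xR) = wlen X g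
      have hnew : ((l.map (wlen X)).sum : ℕ) = (l.map (wlen X)).sum := rfl
      omega⟩

theorem isLinFact_of_chain {g : G} {p q : G × List G × G}
    (hq : IsLinFact X g q) (h : Relation.ReflTransGen MergeStep p q) : IsLinFact X g p := by
  induction h using Relation.ReflTransGen.head_induction_on with
  | refl => exact hq
  | head h' _ ih => exact isLinFact_of_mergeStep ih h'

/-- Bit at position `i`. -/
def bAt (p : List (Bool × G)) (i : ℕ) : Bool := (p[i]?.getD (true, 1)).1

theorem bAt_cons_zero (q : Bool × G) (p : List (Bool × G)) : bAt (q :: p) 0 = q.1 := by simp [bAt]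

theorem bAt_cons_succ (q : Bool × G) (p : List (Bool × G)) (i : ℕ) :
    bAt (q :: p) (i + 1) = bAt p i := by simp [bAt]

theorem bAt_of_pord {p q : List (Bool × G)} (h : POrd p q) :
    ∀ i, bAt p i = true → bAt q i = true := by
  induction h with
  | nil => intro i hi; exact hi
  | @cons a b l₁ l₂ h t ih =>
    intro i hi
    cases i with
    | zero => rw [bAt_cons_zero] at hi ⊢; exact h.2 hi
    | succ j => rw [bAt_cons_succ] at hi ⊢; exact ih j hi

theorem pord_of_bAt {p q : List (Bool × G)} (hsnd : p.map Prod.snd = q.map Prod.snd)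
    (h : ∀ i, bAt p i = true → bAt q i = true) : POrd p q := by
  induction p generalizing q with
  | nil =>
    cases q with
    | nil => exact List.Forall₂.nil
    | cons _ _ => simp at hsnd
  | cons a t ih =>
    cases q with
    | nil => simp at hsnd
    | cons b s =>
      simp only [List.map_cons, List.cons.injEq] at hsnd
      refine List.Forall₂.cons ⟨hsnd.1, ?_⟩ (ih hsnd.2 ?_)
      · intro h0
        have := h 0 (by rwa [bAt_cons_zero])
        rwa [bAt_cons_zero] at this
      · intro i hi
        have := h (i + 1) (by rwa [bAt_cons_succ])
        rwa [bAt_cons_succ] at this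

theorem pairs_ext {p q : List (Bool × G)} (hsnd : p.map Prod.snd = q.map Prod.snd)
    (h : ∀ i, bAt p i = bAt q i) : p = q := by
  induction p generalizing q with
  | nil =>
    cases q with
    | nil => rfl
    | cons _ _ => simp at hsnd
  | cons a t ih =>
    cases q with
    | nil => simp at hsnd
    | cons b s =>
      simp only [List.map_cons, List.cons.injEq] at hsnd
      have h0 := h 0
      rw [bAt_cons_zero, bAt_cons_zero] at h0
      have : a = b := Prod.ext h0 hsnd.1
      rw [this, ih hsnd.2 (fun i => by
        have := h (i + 1); rwa [bAt_cons_succ, bAt_cons_succ] at this)]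

/-- A chain of Steps down from a blocks-presentation lands on blocks-presentations. -/
theorem exists_pord_of_chain {L : G} {v : List G} {P : List (Bool × G)}
    (h : Relation.ReflTransGen Step v (blocks L P)) :
    ∃ P', POrd P P' ∧ v = blocks L P' := by
  induction h using Relation.ReflTransGen.head_induction_on with
  | refl => exact ⟨P, POrd.refl P, rfl⟩
  | head h' _ ih =>
    obtain ⟨P', hP', rfl⟩ := ih
    obtain ⟨u, xx, yy, t, hc, ha⟩ := h'
    obtain ⟨P'', hP'', hb⟩ := blocks_split hc
    exact ⟨P'', hP'.trans hP'', by rw [ha, hb]⟩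

theorem blocks_head_absurd {L x : G} {t : List (Bool × G)} {rest : List G}
    (h : blocks (L * x) t = L :: rest) (hr : rest ≠ [])
    (Hadd : ∀ u v w, x :: (t.map Prod.snd) = u ++ v ++ w →
      wlen X v.prod = (v.map (wlen X)).sum)
    (hpos : ∀ z ∈ (x :: t.map Prod.snd).dropLast, 1 ≤ wlen X z) : False := by
  have hlen := congrArg List.length h
  rw [blocks_length] at hlen
  simp only [List.length_cons] at hlen
  have ht : t ≠ [] := by
    intro h0; subst h0
    simp at hlen
    exact hr hlen
  have hh := blocks_head (L * x) t
  rw [h] at hh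
  simp only [List.head?_cons, Option.some.injEq] at hh
  have hxq : x * ((t.takeWhile (·.1)).map Prod.snd).prod = 1 := by
    have : L * (x * ((t.takeWhile (·.1)).map Prod.snd).prod) = L * 1 := by
      rw [mul_one, ← mul_assoc]; exact hh.symm
    exact mul_left_cancel this
  have hsplit : x :: t.map Prod.snd
      = [] ++ (x :: (t.takeWhile (·.1)).map Prod.snd) ++ ((t.dropWhile (·.1)).map Prod.snd) := by
    simp only [List.nil_append, List.cons_append, List.cons.injEq, true_and]
    rw [← List.map_append, List.takeWhile_append_dropWhile]
  have hadd := Hadd _ _ _ hsplit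
  have hx1 : 1 ≤ wlen X x := by
    apply hpos
    have : t.map Prod.snd ≠ [] := by simpa using ht
    obtain ⟨a, u, hu⟩ := List.exists_cons_of_ne_nil this
    rw [hu]
    simp
  rw [List.prod_cons, hxq, wlen_one] at hadd
  simp only [List.map_cons, List.sum_cons] at hadd
  omega

theorem blocks_inj {P₁ P₂ : List (Bool × G)}
    (hsnd : P₁.map Prod.snd = P₂.map Prod.snd)
    (Hadd : ∀ u v w, P₁.map Prod.snd = u ++ v ++ w → wlen X v.prod = (v.map (wlen X)).sum)
    (hpos : ∀ z ∈ (P₁.map Prod.snd).dropLast, 1 ≤ wlen X z)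
    {L : G} (h : blocks L P₁ = blocks L P₂) : P₁ = P₂ := by
  induction P₁ generalizing P₂ L with
  | nil =>
    cases P₂ with
    | nil => rfl
    | cons _ _ => simp at hsnd
  | cons a t₁ ih =>
    obtain ⟨b₁, x⟩ := a
    cases P₂ with
    | nil => simp at hsnd
    | cons b t₂ =>
      obtain ⟨b₂, x'⟩ := b
      simp only [List.map_cons, List.cons.injEq] at hsnd
      obtain ⟨rfl, hsnd'⟩ : x = x' ∧ t₁.map Prod.snd = t₂.map Prod.snd := hsnd
      have Hadd' : ∀ u v w, t₁.map Prod.snd = u ++ v ++ w →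
          wlen X v.prod = (v.map (wlen X)).sum := by
        intro u v w huvw
        exact Hadd (x :: u) v w (by simp [huvw])
      have hpos' : ∀ z ∈ (t₁.map Prod.snd).dropLast, 1 ≤ wlen X z := by
        intro z hz
        apply hpos
        rcases hmt : t₁.map Prod.snd with _ | ⟨c, u⟩
        · rw [hmt] at hz; simp at hz
        · rw [hmt] at hz
          simp only [List.map_cons, hmt, List.dropLast_cons₂, List.mem_cons]
          exact Or.inr hz
      cases b₁ <;> cases b₂
      · -- false false
        simp only [blocks] at h
        injection h with h1 h2
        rw [ih hsnd' Hadd' hpos' h2]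
      · -- false true
        exfalso
        simp only [blocks] at h
        exact blocks_head_absurd h.symm (blocks_ne_nil _ _)
          (by rw [← hsnd']; exact Hadd) (by rw [← hsnd']; exact hpos)
      · -- true false
        exfalso
        simp only [blocks] at h
        exact blocks_head_absurd h (blocks_ne_nil _ _) Hadd hpos
      · -- true true
        simp only [blocks] at h
        rw [ih hsnd' Hadd' hpos' h]

end Aux

open Aux

/-- every interval `[x,y]` of `Fact(G,g,I)` is order-isomorphic to the poset of
all subsets of some finite set, ordered by inclusion (a Boolean lattice). -/
theorem stmt5 {G : Type*} [Group G] (X : Set G)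
    (hX : ∀ g x, x ∈ X → g * x * g⁻¹ ∈ X)
    (g : G) (hg : g ∈ Submonoid.closure X)
    (x y : FactI X g) (hxy : x ≤ y) :
    ∃ m : ℕ, Nonempty ({z : FactI X g // x ≤ z ∧ z ≤ y} ≃o Finset (Fin m)) := by
  classical
  obtain ⟨⟨L, mid, R⟩, hy⟩ := y
  set xs : List G := mid ++ [R] with hxs
  set base : List (Bool × G) := xs.map (fun z => (false, z)) with hbase
  have hflaty : flat ((L, mid, R) : G × List G × G) = blocks L base := by
    rw [hbase, blocks_allFalse]; rfl
  -- geodesic facts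
  have hFmem : ∀ a ∈ L :: xs, a ∈ Submonoid.closure X := by
    intro a ha
    simp only [hxs, List.mem_cons, List.mem_append, List.mem_singleton] at ha
    rcases ha with rfl | h | rfl | h
    · exact hy.1
    · exact (hy.2.2.1 a h).1
    · exact hy.2.1
    · exact absurd h List.not_mem_nil
  have hFprod : (L :: xs).prod = g := by
    rw [← hy.2.2.2.1]
    simp [hxs, mul_assoc]
  have hFsum : ((L :: xs).map (wlen X)).sum = wlen X (L :: xs).prod := by
    rw [hFprod]
    have h := hy.2.2.2.2
    simp only at h
    simp only [hxs, List.map_cons, List.map_append, List.sum_cons, List.sum_append,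
      List.map_cons, List.sum_cons, List.map_nil, List.sum_nil]
    omega
  have Hadd : ∀ u v w, xs = u ++ v ++ w → wlen X v.prod = (v.map (wlen X)).sum := by
    intro u v w huvw
    exact wlen_additive (u := L :: u) (v := v) (w := w) hFmem hFsum (by simp [huvw])
  have hposxs : ∀ z ∈ xs.dropLast, 1 ≤ wlen X z := by
    intro z hz
    rw [show xs.dropLast = mid from List.dropLast_concat] at hz
    exact one_le_wlen (hy.2.2.1 z hz).1 (hy.2.2.1 z hz).2
  have uniq : ∀ P P' : List (Bool × G), P.map Prod.snd = xs → P'.map Prod.snd = xs →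
      blocks L P = blocks L P' → P = P' := by
    intro P P' hP hP' hb
    exact blocks_inj (hP.trans hP'.symm) (fun u v w h => Hadd u v w (by rw [← hP]; exact h))
      (by rw [hP]; exact hposxs) hb
  -- presentation of elements below y
  have spec : ∀ z : FactI X g, z ≤ ⟨(L, mid, R), hy⟩ →
      ∃ P, P.map Prod.snd = xs ∧ flat z.val = blocks L P := by
    intro z hz
    have hc := mergeStep_chain_flat (hz : Relation.ReflTransGen MergeStep z.val (L, mid, R))
    rw [hflaty] at hc
    obtain ⟨P, hPord, hPeq⟩ := exists_pord_of_chain hc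
    refine ⟨P, ?_, hPeq⟩
    rw [← hPord.map_snd, hbase]
    simp
  -- the presentation of x
  obtain ⟨P₀, hP₀snd, hxflat⟩ := spec x hxy
  have hP₀len : P₀.length = xs.length := by rw [← hP₀snd, List.length_map]
  have hcf : 1 ≤ P₀.countP (fun q => !q.1) := by
    have h1 := congrArg List.length hxflat
    rw [flat_length, blocks_length] at h1
    omega
  -- index set
  set T : Finset (Fin xs.length) := Finset.univ.filter (fun i => bAt P₀ i.val = true) with hT
  set m := Fintype.card {i : Fin xs.length // i ∈ T} with hm
  set e : Fin m ≃ {i : Fin xs.length // i ∈ T} := (Fintype.equivFin _).symm with he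
  refine ⟨m, ?_⟩
  -- presentations of interval elements
  set Pz : {z : FactI X g // x ≤ z ∧ z ≤ ⟨(L, mid, R), hy⟩} → List (Bool × G) :=
    fun z => (spec z.1 z.2.2).choose with hPzdef
  have hPz_snd : ∀ z, (Pz z).map Prod.snd = xs := fun z => (spec z.1 z.2.2).choose_spec.1
  have hPz_eq : ∀ z, flat z.1.val = blocks L (Pz z) := fun z => (spec z.1 z.2.2).choose_spec.2
  have hPz_len : ∀ z, (Pz z).length = xs.length := fun z => by
    rw [← hPz_snd z, List.length_map]
  have keyx : ∀ z, POrd (Pz z) P₀ := by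
    intro z
    have hc := mergeStep_chain_flat
      (z.2.1 : Relation.ReflTransGen MergeStep x.val z.1.val)
    rw [hPz_eq z] at hc
    obtain ⟨P', hord, heq⟩ := exists_pord_of_chain hc
    have hP'snd : P'.map Prod.snd = xs := by rw [← hord.map_snd, hPz_snd]
    have : P' = P₀ := uniq P' P₀ hP'snd hP₀snd (by rw [← heq, ← hxflat])
    rwa [this] at hord
  have key1 : ∀ z₁ z₂, Relation.ReflTransGen MergeStep z₁.1.val z₂.1.val →
      POrd (Pz z₂) (Pz z₁) := by
    intro z₁ z₂ h12
    have hc := mergeStep_chain_flat h12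
    rw [hPz_eq z₂] at hc
    obtain ⟨P', hord, heq⟩ := exists_pord_of_chain hc
    have hP'snd : P'.map Prod.snd = xs := by rw [← hord.map_snd, hPz_snd]
    have : P' = Pz z₁ := uniq P' (Pz z₁) hP'snd (hPz_snd z₁) (by rw [← heq, ← hPz_eq z₁])
    rwa [this] at hord
  have key2 : ∀ z₁ z₂, POrd (Pz z₂) (Pz z₁) →
      Relation.ReflTransGen MergeStep z₁.1.val z₂.1.val := by
    intro z₁ z₂ h
    have hc := blocks_mono h L
    rw [← hPz_eq z₁, ← hPz_eq z₂] at hc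
    have h2 : 2 ≤ (flat z₁.1.val).length := by rw [flat_length]; omega
    have := step_chain hc h2
    rwa [unflat_flat, unflat_flat] at this
  -- maps
  set toS : {z : FactI X g // x ≤ z ∧ z ≤ ⟨(L, mid, R), hy⟩} → Finset (Fin m) :=
    fun z => Finset.univ.filter (fun j => bAt (Pz z) (e j).val.val = false) with htoS
  set QS : Finset (Fin m) → List (Bool × G) := fun S =>
    List.ofFn (fun i : Fin xs.length =>
      (if h : bAt P₀ i.val = true
        then decide (e.symm ⟨i, Finset.mem_filter.2 ⟨Finset.mem_univ i, h⟩⟩ ∉ S)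
        else false, xs.get i)) with hQSdef
  have hQS_snd : ∀ S, (QS S).map Prod.snd = xs := by
    intro S
    rw [hQSdef]
    simp only [List.map_ofFn]
    exact List.ofFn_get xs
  have hQS_bAt : ∀ S (i : ℕ) (hi : i < xs.length),
      bAt (QS S) i = (if h : bAt P₀ i = true
        then decide (e.symm ⟨⟨i, hi⟩, Finset.mem_filter.2 ⟨Finset.mem_univ _, h⟩⟩ ∉ S)
        else false) := by
    intro S i hi
    rw [hQSdef]
    simp [bAt, List.getElem?_ofFn, hi]
  have hbAt_ge : ∀ (P : List (Bool × G)) (i : ℕ), P.length ≤ i → bAt P i = true := by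
    intro P i h
    simp [bAt, List.getElem?_eq_none h]
  have hQSord : ∀ S, POrd (QS S) P₀ := by
    intro S
    refine pord_of_bAt ((hQS_snd S).trans hP₀snd.symm) ?_
    intro i hi
    by_cases hn : i < xs.length
    · rw [hQS_bAt S i hn] at hi
      by_cases h : bAt P₀ i = true
      · exact h
      · rw [dif_neg h] at hi; exact absurd hi (by simp)
    · exact hbAt_ge P₀ i (by omega)
  have hQS_len : ∀ S, (QS S).length = xs.length := by
    intro S; rw [← hQS_snd S, List.length_map]
  have hbaseord : ∀ (P : List (Bool × G)), P.map Prod.snd = xs → POrd base P := by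
    intro P hP
    refine pord_of_bAt (by rw [hbase, hP]; simp) ?_
    intro i hi
    by_cases hn : i < xs.length
    · exfalso
      rw [hbase] at hi
      simp [bAt, List.getElem?_map, List.getElem?_eq_getElem hn] at hi
    · exact hbAt_ge P i (by rw [← hP, List.length_map] at hn; omega)
  have h2len : ∀ S, 2 ≤ (blocks L (QS S)).length := by
    intro S
    rw [blocks_length]
    have := (hQSord S).count
    omega
  have hley : ∀ S, Relation.ReflTransGen MergeStep (unflat (blocks L (QS S))) (L, mid, R) := by
    intro S
    have hc := blocks_mono (hbaseord (QS S) (hQS_snd S)) L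
    have := step_chain hc (h2len S)
    rwa [← hflaty, unflat_flat] at this
  have hxle : ∀ S, Relation.ReflTransGen MergeStep x.val (unflat (blocks L (QS S))) := by
    intro S
    have hc := blocks_mono (hQSord S) L
    rw [← hxflat] at hc
    have := step_chain hc (by rw [flat_length]; omega)
    rwa [unflat_flat] at this
  set fromS : Finset (Fin m) → {z : FactI X g // x ≤ z ∧ z ≤ ⟨(L, mid, R), hy⟩} :=
    fun S => ⟨⟨unflat (blocks L (QS S)), isLinFact_of_chain hy (hley S)⟩, hxle S, hley S⟩
    with hfromS
  have hPfrom : ∀ S, Pz (fromS S) = QS S := by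
    intro S
    refine uniq _ _ (hPz_snd _) (hQS_snd S) ?_
    rw [← hPz_eq (fromS S)]
    exact (flat_unflat (h2len S)).symm ▸ (flat_unflat (h2len S))
  -- the order isomorphism
  refine ⟨{ toFun := toS, invFun := fromS, left_inv := ?_, right_inv := ?_,
            map_rel_iff' := ?_ }⟩
  · -- left inverse
    intro z
    have hQP : QS (toS z) = Pz z := by
      refine pairs_ext ((hQS_snd _).trans (hPz_snd z).symm) ?_
      intro i
      by_cases hn : i < xs.length
      · rw [hQS_bAt _ i hn]
        by_cases h : bAt P₀ i = true
        · rw [dif_pos h]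
          have hsub : (⟨⟨i, hn⟩, Finset.mem_filter.2 ⟨Finset.mem_univ _, h⟩⟩ :
              {i : Fin xs.length // i ∈ T}) ∈ Set.univ := trivial
          rw [htoS]
          simp only [Finset.mem_filter, Finset.mem_univ, true_and,
            Equiv.apply_symm_apply]
          rcases hb : bAt (Pz z) i with _ | _
          · simp [hb]
          · simp [hb]
        · rw [dif_neg h]
          rcases hb : bAt (Pz z) i with _ | _
          · rfl
          · exact absurd (bAt_of_pord (keyx z) i hb) h
      · rw [hbAt_ge _ i (by rw [hQS_len]; omega), hbAt_ge _ i (by rw [hPz_len]; omega)]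
    apply Subtype.ext
    apply Subtype.ext
    show unflat (blocks L (QS (toS z))) = z.1.val
    rw [hQP, ← hPz_eq z, unflat_flat]
  · -- right inverse
    intro S
    ext j
    rw [htoS]
    simp only [Finset.mem_filter, Finset.mem_univ, true_and]
    rw [hPfrom S]
    have hlt : ((e j).val : Fin xs.length).val < xs.length := (e j).val.isLt
    rw [hQS_bAt S _ hlt]
    have hmem : bAt P₀ ((e j).val : Fin xs.length).val = true := by
      exact (Finset.mem_filter.1 (e j).2).2
    rw [dif_pos hmem]
    have hsubeq : (⟨⟨((e j).val : Fin xs.length).val, hlt⟩,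
        Finset.mem_filter.2 ⟨Finset.mem_univ _, hmem⟩⟩ : {i : Fin xs.length // i ∈ T})
        = e j := Subtype.ext (Fin.ext rfl)
    rw [hsubeq, Equiv.symm_apply_apply]
    by_cases hj : j ∈ S <;> simp [hj]
  · -- order iso
    intro z₁ z₂
    show toS z₁ ⊆ toS z₂ ↔ _
    constructor
    · intro hsub
      have hord : POrd (Pz z₂) (Pz z₁) := by
        refine pord_of_bAt ((hPz_snd z₂).trans (hPz_snd z₁).symm) ?_
        intro i hi
        by_cases hn : i < xs.length
        · by_contra hfalse
          have hb1 : bAt (Pz z₁) i = false := by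
            rcases hb : bAt (Pz z₁) i with _ | _
            · rfl
            · exact absurd hb hfalse
          have hP0 : bAt P₀ i = true := bAt_of_pord (keyx z₂) i hi
          set jj : Fin m := e.symm ⟨⟨i, hn⟩, Finset.mem_filter.2 ⟨Finset.mem_univ _, hP0⟩⟩
            with hjj
          have hj1 : jj ∈ toS z₁ := by
            rw [htoS]
            simp only [Finset.mem_filter, Finset.mem_univ, true_and]
            rw [hjj, Equiv.apply_symm_apply]
            exact hb1
          have hj2 := hsub hj1
          rw [htoS] at hj2
          simp only [Finset.mem_filter, Finset.mem_univ, true_and] at hj2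
          rw [hjj, Equiv.apply_symm_apply] at hj2
          rw [hj2] at hi
          exact absurd hi (by simp)
        · exact hbAt_ge _ i (by rw [hPz_len]; omega)
      exact key2 z₁ z₂ hord
    · intro h12
      have hord := key1 z₁ z₂ h12
      intro j hj
      rw [htoS] at hj ⊢
      simp only [Finset.mem_filter, Finset.mem_univ, true_and] at hj ⊢
      rcases hb : bAt (Pz z₂) (e j).val.val with _ | _
      · rfl
      · have := bAt_of_pord hord _ hb
        rw [this] at hj
        exact absurd hj (by simp)
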